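/- arXiv:2211.04377 — 3 statements merged into one kernel-verified Lean document; each statement's English description precedes it below -/
import Mathlib

section
/- Let p ≥ 5 be a prime, m ≥ 1, and let ζ be a primitive p^m-th root of unity in an algebraic closure of Q_p. Then the infimum over positive integers n of ord_p((ζ-1)^n / n) equals 1/(p-1) + 1 - m, and this infimum is attained at n = p^m. Here ord_p is the p-adic valuation normalized by ord_p(p) = 1. -/
/-- Let `p ≥ 5` be a prime and `m ≥ 1`, and let `ζ` be a primitive `p^m`-th root of unity
(so that `ord_p (ζ - 1) = 1 / (p^(m-1) * (p-1))`).  Then the infimum over positive integers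
`n` of `ord_p ((ζ-1)^n / n) = n · ord_p (ζ-1) - ord_p n` equals `1/(p-1) + 1 - m`, and it is
attained at `n = p^m`. -/
theorem inf_ord_zeta_sub_one_pow_div
    (p : ℕ) (hp : p.Prime) (hp5 : 5 ≤ p) (m : ℕ) (hm : 1 ≤ m)
    (σ : ℚ) (hσ : σ = 1 / ((p : ℚ) ^ (m - 1) * ((p : ℚ) - 1))) :
    IsLeast {x : ℚ | ∃ n : ℕ, 1 ≤ n ∧ x = n * σ - (padicValNat p n : ℚ)}
      (1 / ((p : ℚ) - 1) + 1 - m) ∧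
    (p ^ m : ℕ) * σ - (padicValNat p (p ^ m) : ℚ) = 1 / ((p : ℚ) - 1) + 1 - m := by
  haveI : Fact p.Prime := ⟨hp⟩
  obtain ⟨m', rfl⟩ : ∃ m', m = m' + 1 := ⟨m - 1, by omega⟩
  have hm1 : m' + 1 - 1 = m' := by omega
  rw [hm1] at hσ
  have hp1 : (1:ℚ) < p := by
    have : (5:ℚ) ≤ p := by exact_mod_cast hp5
    linarith
  have hB : (0:ℚ) < (p:ℚ) - 1 := by linarith
  have hA : (0:ℚ) < (p:ℚ) ^ m' := by positivity
  have hBinv : (1 / ((p:ℚ) - 1)) * ((p:ℚ) - 1) = 1 := one_div_mul_cancel hB.ne'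
  have hval : padicValNat p (p ^ (m' + 1)) = m' + 1 := padicValNat.prime_pow (m' + 1)
  have hattain : ((p ^ (m' + 1) : ℕ) : ℚ) * σ - (padicValNat p (p ^ (m' + 1)) : ℚ)
      = 1 / ((p : ℚ) - 1) + 1 - (m' + 1 : ℕ) := by
    rw [hval, hσ]
    push_cast
    rw [pow_succ]
    field_simp
    ring
  refine ⟨⟨⟨p ^ (m' + 1), Nat.one_le_pow _ _ hp.pos, hattain.symm⟩, ?_⟩, hattain⟩
  rintro x ⟨n, hn, rfl⟩
  obtain ⟨v, hv⟩ : ∃ v, padicValNat p n = v := ⟨_, rfl⟩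
  rw [hv]
  have hdvd : p ^ v ≤ n := hv ▸ Nat.le_of_dvd (by omega) pow_padicValNat_dvd
  have hpv : ((p:ℚ) ^ v) ≤ (n:ℚ) := by exact_mod_cast hdvd
  -- key inequality: n ≥ p^m' * (p + (v - (m'+1)) * (p - 1))
  have key : (p:ℚ) ^ m' * ((p:ℚ) + ((v:ℚ) - (m' + 1)) * ((p:ℚ) - 1)) ≤ (n:ℚ) := by
    rcases lt_trichotomy v (m' + 1) with hc | hc | hc
    · rcases Nat.lt_or_ge (v + 1) (m' + 1) with hc2 | hc2
      · -- v + 2 ≤ m' + 1 : the factor is negative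
        have h1 : (v:ℚ) - (m' + 1) ≤ -2 := by
          have : (v:ℚ) + 2 ≤ (m':ℚ) + 1 := by exact_mod_cast hc2
          linarith
        have hp5Q : (5:ℚ) ≤ p := by exact_mod_cast hp5
        have h2 : (p:ℚ) + ((v:ℚ) - (m' + 1)) * ((p:ℚ) - 1) ≤ 0 := by
          nlinarith [mul_le_mul_of_nonneg_right h1 hB.le]
        have h3 : (0:ℚ) ≤ (n:ℚ) := by positivity
        nlinarith
      · -- v = m'
        have hvm : v = m' := by omega
        subst hvm
        have : (p:ℚ) + ((v:ℚ) - (v + 1)) * ((p:ℚ) - 1) = 1 := by ring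
        rw [this, mul_one]
        exact hpv
    · -- v = m' + 1
      subst hc
      have : (p:ℚ) ^ m' * ((p:ℚ) + (((m' + 1 : ℕ):ℚ) - (m' + 1)) * ((p:ℚ) - 1))
          = (p:ℚ) ^ (m' + 1) := by push_cast; ring
      rw [this]
      exact hpv
    · -- v ≥ m' + 2
      obtain ⟨k, hk⟩ : ∃ k, v = m' + 1 + k := ⟨v - (m' + 1), by omega⟩
      subst hk
      have hkp : ((k:ℚ) + 1) ≤ (p:ℚ) ^ k := by
        exact_mod_cast Nat.succ_le_of_lt (Nat.lt_pow_self hp.one_lt : k < p ^ k)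
      have hpk0 : (0:ℚ) < (p:ℚ) ^ k := by positivity
      have h1 : (p:ℚ) + (((m' + 1 + k : ℕ):ℚ) - (m' + 1)) * ((p:ℚ) - 1)
          ≤ (p:ℚ) ^ k * (p:ℚ) := by
        push_cast
        nlinarith
      have h2 : (p:ℚ) ^ m' * ((p:ℚ) ^ k * (p:ℚ)) = (p:ℚ) ^ (m' + 1 + k) := by ring
      calc (p:ℚ) ^ m' * ((p:ℚ) + (((m' + 1 + k : ℕ):ℚ) - (m' + 1)) * ((p:ℚ) - 1))
          ≤ (p:ℚ) ^ m' * ((p:ℚ) ^ k * (p:ℚ)) := by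
            exact mul_le_mul_of_nonneg_left h1 hA.le
        _ = (p:ℚ) ^ (m' + 1 + k) := h2
        _ ≤ (n:ℚ) := hpv
  -- conclude
  have h2 : 1 / ((p:ℚ) - 1) + 1 - ((m' + 1 : ℕ):ℚ) + (v:ℚ) ≤ (n:ℚ) / ((p:ℚ) ^ m' * ((p:ℚ) - 1)) := by
    rw [le_div_iff₀ (by positivity)]
    push_cast
    nlinarith [key]
  rw [hσ, mul_one_div]
  push_cast at h2 ⊢
  linarith
end

section
/- Let Λ be an integral domain and M a Λ-module with a surjection from a rank-2 free module identifying the image of a Λ-linear injective map Col : M → Λ^⊕2 with I = {(G₁, G₂) ∈ Λ^⊕2 : c₁·G₁(0) = c₂·G₂(0)}, where Λ = O[[X]], evaluation at 0 is the augmentation G ↦ G(0), and c₁, c₂ ∈ O with c₁ a unit. Then the pair of elements (X, 0) and (c₂/c₁, 1) forms a Λ-basis of I, and hence pulls back to a Λ-basis (z₁, z₂) of M. -/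
open PowerSeries

/-- The `Λ`-submodule `I = {(G₁, G₂) ∈ Λ ⊕ Λ : c₁·G₁(0) = c₂·G₂(0)}` of `Λ ⊕ Λ`, where
`Λ = O[[X]]` and `G(0)` denotes the constant coefficient. -/
def colImage (O : Type*) [CommRing O] (c₁ c₂ : O) :
    Submodule (PowerSeries O) (PowerSeries O × PowerSeries O) where
  carrier := {G | c₁ * PowerSeries.constantCoeff G.1 = c₂ * PowerSeries.constantCoeff G.2}
  add_mem' := by
    intro a b ha hb
    simp only [Set.mem_setOf_eq, Prod.fst_add, Prod.snd_add, map_add, mul_add] at *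
    rw [ha, hb]
  zero_mem' := by simp
  smul_mem' := by
    intro c x hx
    simp only [Set.mem_setOf_eq, Prod.smul_fst, Prod.smul_snd, smul_eq_mul, map_mul] at *
    rw [mul_left_comm, hx, mul_left_comm]

/-- Let `O` be a complete DVR, `Λ = O[[X]]`, and `c₁, c₂ ∈ O` with `c₁` a unit, and let
`a' = c₂/c₁`.  Then `(X, 0)` and `(a', 1)` form a `Λ`-basis of
`I = {(G₁,G₂) : c₁·G₁(0) = c₂·G₂(0)}`; hence if `Col : M → Λ ⊕ Λ` is an injective `Λ`-linear
map with image `I`, these elements pull back to a `Λ`-basis `(z₁, z₂)` of `M`. -/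
theorem colImage_basis
    (O : Type*) [CommRing O] [IsDomain O] [IsDiscreteValuationRing O]
    [IsAdicComplete (IsLocalRing.maximalIdeal O) O]
    (c₁ c₂ a' : O) (hc₁ : IsUnit c₁) (ha' : c₁ * a' = c₂)
    (M : Type*) [AddCommGroup M] [Module (PowerSeries O) M]
    (Col : M →ₗ[PowerSeries O] (PowerSeries O × PowerSeries O))
    (hinj : Function.Injective Col)
    (hrange : LinearMap.range Col = colImage O c₁ c₂) :
    (∃ bI : Module.Basis (Fin 2) (PowerSeries O) (colImage O c₁ c₂),
      (bI 0 : PowerSeries O × PowerSeries O) = (PowerSeries.X, 0) ∧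
      (bI 1 : PowerSeries O × PowerSeries O) = (PowerSeries.C a', 1)) ∧
    ∃ z₁ z₂ : M, Col z₁ = (PowerSeries.X, 0) ∧ Col z₂ = (PowerSeries.C a', 1) ∧
      ∃ b : Module.Basis (Fin 2) (PowerSeries O) M, b 0 = z₁ ∧ b 1 = z₂ := by
  have hmem0 : ((PowerSeries.X, 0) : PowerSeries O × PowerSeries O) ∈ colImage O c₁ c₂ := by
    simp [colImage]
  have hmem1 : ((PowerSeries.C a', 1) : PowerSeries O × PowerSeries O) ∈ colImage O c₁ c₂ := by
    simp [colImage, ha']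
  set v : Fin 2 → colImage O c₁ c₂ := ![⟨_, hmem0⟩, ⟨_, hmem1⟩] with hv
  have hli : LinearIndependent (PowerSeries O) v := by
    rw [Fintype.linearIndependent_iff]
    intro g hg
    have hg' : g 0 • ((PowerSeries.X, 0) : PowerSeries O × PowerSeries O)
        + g 1 • ((PowerSeries.C a', 1) : PowerSeries O × PowerSeries O) = 0 := by
      have := congrArg (Subtype.val) hg
      simpa [hv, Fin.sum_univ_two] using this
    have h2 : g 1 = 0 := by
      have := congrArg Prod.snd hg'
      simpa using this
    have h1 : g 0 = 0 := by
      have h3 : g 0 * PowerSeries.X = 0 := by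
        have := congrArg Prod.fst hg'
        simpa [h2] using this
      rcases mul_eq_zero.mp h3 with h | h
      · exact h
      · exact absurd h PowerSeries.X_ne_zero
    intro i
    fin_cases i <;> assumption
  have hspan : ⊤ ≤ Submodule.span (PowerSeries O) (Set.range v) := by
    rintro ⟨⟨G₁, G₂⟩, hG⟩ -
    have hG' : c₁ * PowerSeries.constantCoeff G₁ = c₂ * PowerSeries.constantCoeff G₂ := hG
    have hcc : PowerSeries.constantCoeff G₁ = a' * PowerSeries.constantCoeff G₂ := by
      rcases hc₁ with ⟨u, rfl⟩
      have : (u : O) * PowerSeries.constantCoeff G₁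
          = (u : O) * (a' * PowerSeries.constantCoeff G₂) := by
        rw [hG', ← ha']; ring
      exact mul_left_cancel₀ u.ne_zero this
    have hdvd : (PowerSeries.X : PowerSeries O) ∣ G₁ - PowerSeries.C a' * G₂ := by
      rw [PowerSeries.X_dvd_iff]
      simp [hcc]
    obtain ⟨H, hH⟩ := hdvd
    have hx : (⟨(G₁, G₂), hG⟩ : colImage O c₁ c₂) = H • v 0 + G₂ • v 1 := by
      apply Subtype.ext
      simp only [hv, Matrix.cons_val_zero, Matrix.cons_val_one, Matrix.head_cons]
      have : G₁ = H * PowerSeries.X + G₂ * PowerSeries.C a' := by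
        rw [mul_comm H, ← hH]; ring
      refine Prod.ext ?_ ?_
      · simpa using this
      · simp
    rw [hx]
    exact add_mem (Submodule.smul_mem _ _ (Submodule.subset_span ⟨0, rfl⟩))
      (Submodule.smul_mem _ _ (Submodule.subset_span ⟨1, rfl⟩))
  let bI : Module.Basis (Fin 2) (PowerSeries O) (colImage O c₁ c₂) := Module.Basis.mk hli hspan
  have hb0 : (bI 0 : PowerSeries O × PowerSeries O) = (PowerSeries.X, 0) := by
    simp [bI, Module.Basis.mk_apply, hv]
  have hb1 : (bI 1 : PowerSeries O × PowerSeries O) = (PowerSeries.C a', 1) := by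
    simp [bI, Module.Basis.mk_apply, hv]
  refine ⟨⟨bI, hb0, hb1⟩, ?_⟩
  let e : M ≃ₗ[PowerSeries O] colImage O c₁ c₂ :=
    (LinearEquiv.ofInjective Col hinj).trans (LinearEquiv.ofEq _ _ hrange)
  have hCol : ∀ y : colImage O c₁ c₂, Col (e.symm y) = (y : PowerSeries O × PowerSeries O) := by
    intro y
    exact congrArg Subtype.val (e.apply_symm_apply y)
  refine ⟨e.symm (bI 0), e.symm (bI 1), by rw [hCol, hb0], by rw [hCol, hb1],
    bI.map e.symm, rfl, rfl⟩
end

section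
/- Let K be a field, α ≠ β ∈ K nonzero with αβ = p ∈ K nonzero, and let S be the matrix with rows (1,1), (-α,-β), and A = p^{-1}·S·diag(α,β)·S^{-1}. Let s₁, s₂ ∈ K and Q the matrix with rows (s₁, s₂), (0, 0). Then S^{-1}·A^{n+1}·Q = (α-β)^{-1} · [rows (-s₁/β^n, -s₂/β^n), (s₁/α^n, s₂/α^n)]. -/
/-- Let `K` be a field, `α ≠ β` nonzero with `αβ = p ≠ 0`, `S = [[1,1],[-α,-β]]` and
`A = p⁻¹·S·diag(α,β)·S⁻¹`.  For `Q = [[s₁,s₂],[0,0]]` we have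
`S⁻¹·A^{n+1}·Q = (α-β)⁻¹·[[-s₁/β^n, -s₂/β^n],[s₁/α^n, s₂/α^n]]`. -/
theorem log_matrix_computation
    (K : Type*) [Field K] (α β p s₁ s₂ : K) (n : ℕ)
    (hne : α ≠ β) (hα : α ≠ 0) (hβ : β ≠ 0) (hprod : α * β = p) (hp : p ≠ 0)
    (S A Q : Matrix (Fin 2) (Fin 2) K)
    (hS : S = !![1, 1; -α, -β])
    (hA : A = p⁻¹ • (S * !![α, 0; 0, β] * S⁻¹))
    (hQ : Q = !![s₁, s₂; 0, 0]) :
    S⁻¹ * A ^ (n + 1) * Q =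
      (α - β)⁻¹ • !![-s₁ / β ^ n, -s₂ / β ^ n; s₁ / α ^ n, s₂ / α ^ n] := by
  have hsub : α - β ≠ 0 := sub_ne_zero.mpr hne
  have hSinv : S⁻¹ = (α - β)⁻¹ • !![-β, -1; α, 1] := by
    apply Matrix.inv_eq_right_inv
    rw [hS]
    ext i j
    fin_cases i <;> fin_cases j <;>
      simp [Matrix.mul_apply, Fin.sum_univ_succ, Matrix.smul_apply] <;>
      field_simp <;> ring
  have hSS : S⁻¹ * S = 1 := by
    rw [hSinv, hS]
    ext i j
    fin_cases i <;> fin_cases j <;>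
      simp [Matrix.mul_apply, Fin.sum_univ_succ, Matrix.smul_apply] <;>
      field_simp <;> ring
  have hSS' : S * S⁻¹ = 1 := by
    rw [hSinv, hS]
    ext i j
    fin_cases i <;> fin_cases j <;>
      simp [Matrix.mul_apply, Fin.sum_univ_succ, Matrix.smul_apply] <;>
      field_simp <;> ring
  set B : Matrix (Fin 2) (Fin 2) K := p⁻¹ • !![α, 0; 0, β] with hB
  have hA' : A = S * B * S⁻¹ := by
    rw [hA, hB, Matrix.mul_smul, Matrix.smul_mul]
  have hApow : ∀ m : ℕ, A ^ m = S * B ^ m * S⁻¹ := by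
    intro m
    induction m with
    | zero => simp [hSS']
    | succ k ih =>
      rw [pow_succ, ih, hA', pow_succ]
      calc S * B ^ k * S⁻¹ * (S * B * S⁻¹)
          = S * B ^ k * (S⁻¹ * S) * B * S⁻¹ := by simp only [Matrix.mul_assoc]
        _ = S * (B ^ k * B) * S⁻¹ := by rw [hSS]; simp [Matrix.mul_assoc]
  have hDpow : ∀ m : ℕ, (!![α, 0; 0, β] : Matrix (Fin 2) (Fin 2) K) ^ m
      = !![α ^ m, 0; 0, β ^ m] := by
    intro m
    induction m with
    | zero => simp [Matrix.one_fin_two]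
    | succ k ih =>
      rw [pow_succ, ih]
      ext i j
      fin_cases i <;> fin_cases j <;>
        simp [Matrix.mul_apply, Fin.sum_univ_succ, pow_succ]
  have hmain : S⁻¹ * A ^ (n + 1) * Q = B ^ (n + 1) * (S⁻¹ * Q) := by
    rw [hApow]
    calc S⁻¹ * (S * B ^ (n + 1) * S⁻¹) * Q
        = (S⁻¹ * S) * B ^ (n + 1) * S⁻¹ * Q := by simp only [Matrix.mul_assoc]
      _ = B ^ (n + 1) * (S⁻¹ * Q) := by rw [hSS]; simp [Matrix.mul_assoc]
  rw [hmain, hB, smul_pow, hDpow, hSinv, hQ]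
  simp only [Matrix.smul_mul, Matrix.mul_smul, smul_smul, Matrix.mul_fin_two]
  rw [← hprod, mul_inv, mul_pow]
  ext i j
  fin_cases i <;> fin_cases j <;>
    · simp only [Matrix.smul_apply, Matrix.cons_val', Matrix.cons_val_zero, Matrix.cons_val_one,
        Matrix.head_cons, Matrix.head_fin_const, Matrix.empty_val', Matrix.cons_val_fin_one,
        smul_eq_mul, Fin.isValue, Matrix.of_apply, Fin.zero_eta, Fin.mk_one, inv_pow]
      field_simp
      ring
end
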